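/- For all n ≥ 1, the continued fraction [6; (1,5)^{×(n-1)}, 1, 7] equals Q_{n+1}/Q_n, where Q_0 = 1, Q_1 = 8, Q_{n+2} = 7Q_{n+1} - Q_n. (Here (1,5)^{×(n-1)} denotes the block 1,5 repeated n-1 times.) -/

import Mathlib

/-- The value of a finite continued fraction `[a_0; a_1, ..., a_k]`. -/
def cfVal : List ℕ → ℚ
  | [] => 0
  | [a] => (a : ℚ)
  | a :: b :: l => (a : ℚ) + (cfVal (b :: l))⁻¹

lemma cfVal_cons (a : ℕ) (l : List ℕ) (hl : l ≠ []) :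
    cfVal (a :: l) = (a : ℚ) + (cfVal l)⁻¹ := by
  cases l with
  | nil => simp at hl
  | cons b t => rfl

theorem continued_fraction_Q (Q : ℕ → ℕ)
    (hQ0 : Q 0 = 1) (hQ1 : Q 1 = 8) (hQrec : ∀ n, Q (n + 2) = 7 * Q (n + 1) - Q n) :
    ∀ n, 1 ≤ n →
      cfVal (6 :: ((List.replicate (n - 1) ([1, 5] : List ℕ)).flatten ++ [1, 7])) =
        (Q (n + 1) : ℚ) / (Q n : ℚ) := by
  have key : ∀ n, 1 ≤ Q n ∧ Q n < Q (n + 1) := by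
    intro n
    induction n with
    | zero => rw [hQ0, hQ1]; omega
    | succ n ih =>
      have h : Q (n + 1 + 1) = 7 * Q (n + 1) - Q n := hQrec n
      omega
  have hcast : ∀ n, (Q (n + 2) : ℚ) = 7 * Q (n + 1) - Q n := by
    intro n
    have h : Q (n + 2) = 7 * Q (n + 1) - Q n := hQrec n
    have h1 := key n
    have h7 : Q n ≤ 7 * Q (n + 1) := by omega
    rw [h, Nat.cast_sub h7]
    push_cast; ring
  have hgap : ∀ m, 6 * Q (m + 1) < Q (m + 2) := by
    intro m
    have h : Q (m + 2) = 7 * Q (m + 1) - Q m := hQrec m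
    have h1 := key m
    have h2 := key (m + 1)
    omega
  have aux : ∀ m, cfVal ((List.replicate m ([1, 5] : List ℕ)).flatten ++ [1, 7]) =
      (Q (m + 1) : ℚ) / ((Q (m + 2) : ℚ) - 6 * Q (m + 1)) := by
    intro m
    induction m with
    | zero =>
      have h2 : Q 2 = 55 := by
        have h := hQrec 0
        norm_num at h
        rw [h, hQ1, hQ0]
      simp [cfVal, hQ1, h2]
      norm_num
    | succ m ih =>
      have hA : (0 : ℚ) < (Q (m + 1) : ℚ) := by
        exact_mod_cast Nat.lt_of_lt_of_le Nat.zero_lt_one (key (m + 1)).1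
      have hB : (0 : ℚ) < (Q (m + 2) : ℚ) - 6 * Q (m + 1) := by
        have := hgap m
        have : (6 * Q (m + 1) : ℚ) < (Q (m + 2) : ℚ) := by exact_mod_cast this
        push_cast at this ⊢
        linarith
      have hne : ((List.replicate m ([1, 5] : List ℕ)).flatten ++ [1, 7]) ≠ [] := by simp
      have hl : (List.replicate (m + 1) ([1, 5] : List ℕ)).flatten ++ [1, 7] =
          1 :: 5 :: ((List.replicate m ([1, 5] : List ℕ)).flatten ++ [1, 7]) := by
        simp [List.replicate_succ]
      rw [hl]
      rw [show cfVal (1 :: 5 :: ((List.replicate m ([1, 5] : List ℕ)).flatten ++ [1, 7])) =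
        (1 : ℚ) + (cfVal (5 :: ((List.replicate m ([1, 5] : List ℕ)).flatten ++ [1, 7])))⁻¹ from rfl]
      rw [cfVal_cons 5 _ hne, ih]
      simp only [show m + 1 + 1 = m + 2 from rfl, show m + 1 + 2 = m + 3 from rfl]
      have hC : (Q (m + 3) : ℚ) = 7 * Q (m + 2) - Q (m + 1) := hcast (m + 1)
      have hBA : (Q (m + 2) : ℚ) - Q (m + 1) ≠ 0 := by
        have := (key (m + 1)).2
        have : (Q (m + 1) : ℚ) < Q (m + 2) := by exact_mod_cast this
        linarith
      have h5 : (5 : ℚ) + ((Q (m + 1) : ℚ) / ((Q (m + 2) : ℚ) - 6 * Q (m + 1)))⁻¹ ≠ 0 := by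
        rw [inv_div]
        positivity
      rw [hC]
      obtain ⟨a, ha⟩ : ∃ a : ℚ, (Q (m + 1) : ℚ) = a := ⟨_, rfl⟩
      obtain ⟨b, hb⟩ : ∃ b : ℚ, (Q (m + 2) : ℚ) = b := ⟨_, rfl⟩
      simp only [ha, hb] at *
      have ha0 : a ≠ 0 := ne_of_gt hA
      have hb6 : b - 6 * a ≠ 0 := ne_of_gt hB
      push_cast
      rw [inv_div]
      rw [show (5 : ℚ) + (b - 6 * a) / a = (b - a) / a by field_simp; try ring]
      rw [inv_div]
      rw [show (1 : ℚ) + a / (b - a) = b / (b - a) by field_simp; try ring]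
      congr 1
      ring
  intro n hn
  obtain ⟨m, rfl⟩ : ∃ m, n = m + 1 := ⟨n - 1, by omega⟩
  have hne : ((List.replicate m ([1, 5] : List ℕ)).flatten ++ [1, 7]) ≠ [] := by simp
  rw [show m + 1 - 1 = m from rfl, cfVal_cons 6 _ hne, aux m]
  have hA : (0 : ℚ) < (Q (m + 1) : ℚ) := by
    exact_mod_cast Nat.lt_of_lt_of_le Nat.zero_lt_one (key (m + 1)).1
  have hB : (0 : ℚ) < (Q (m + 2) : ℚ) - 6 * Q (m + 1) := by
    have := hgap m
    have : (6 * Q (m + 1) : ℚ) < (Q (m + 2) : ℚ) := by exact_mod_cast this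
    push_cast at this ⊢
    linarith
  rw [inv_div]
  field_simp
  push_cast; ring
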